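/- For a prime power v ≡ 3 (mod 4), the v×v matrix over GF(v) whose (x,y)-entry is 1 if y−x is a nonzero square, 2 if y=x, and 3 otherwise, is a 3-mosaic: colours 1 and 3 each define 2-(v,(v−1)/2,(v−3)/4) designs and colour 2 defines the trivial 2-(v,1,0) design. -/

import Mathlib

open Finset

section Paley
variable {F : Type*} [Field F] [Fintype F] [DecidableEq F]

local notation "χ" => quadraticChar F

lemma sum_chi_shift (hF : ringChar F ≠ 2) (a : F) : ∑ y : F, χ (y - a) = 0 := by
  have := Fintype.sum_bijective (· + a) (Equiv.addRight a).bijective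
    (fun z : F => χ z) (fun y => χ (y - a)) (fun z => by simp)
  rw [← this, quadraticChar_sum_zero hF]

lemma sum_chi_sq (a : F) : ∑ y : F, (χ (y - a)) ^ 2 = (Fintype.card F : ℤ) - 1 := by
  have h : ∀ y : F, (χ (y - a)) ^ 2 = 1 - (if y = a then 1 else 0) := by
    intro y
    by_cases hy : y = a
    · simp [hy, quadraticChar_zero]
    · rw [quadraticChar_sq_one (sub_ne_zero.mpr hy)]; simp [hy]
  rw [Finset.sum_congr rfl (fun y _ => h y), Finset.sum_sub_distrib]
  simp [Finset.card_univ]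

lemma sum_chi_rev (hF : ringChar F ≠ 2) (y : F) : ∑ x : F, χ (y - x) = 0 := by
  rw [Fintype.sum_equiv (Equiv.subLeft y) (fun x : F => χ (y - x)) (fun t : F => χ t)
    (fun x => rfl)]
  exact quadraticChar_sum_zero hF

lemma sum_chi_rev_sq (y : F) : ∑ x : F, (χ (y - x)) ^ 2 = (Fintype.card F : ℤ) - 1 := by
  rw [Fintype.sum_equiv (Equiv.subLeft y) (fun x : F => (χ (y - x)) ^ 2)
    (fun t : F => (χ t) ^ 2) (fun x => rfl)]
  have h : ∀ t : F, (χ t) ^ 2 = 1 - (if t = 0 then 1 else 0) := by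
    intro t
    by_cases ht : t = 0
    · simp [ht, quadraticChar_zero]
    · rw [quadraticChar_sq_one ht]; simp [ht]
  rw [Finset.sum_congr rfl (fun t _ => h t), Finset.sum_sub_distrib]
  simp [Finset.card_univ]

lemma key_sum (hF : ringChar F ≠ 2) {c : F} (hc : c ≠ 0) :
    ∑ z : F, χ z * χ (z + c) = -1 := by
  have h1 : ∀ z : F, χ z * χ (z + c) = χ (1 + c * z⁻¹) - if z = 0 then 1 else 0 := by
    intro z
    by_cases hz : z = 0
    · simp [hz, quadraticChar_zero]
    · have hzc : z + c = z * (1 + c * z⁻¹) := by field_simp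
      rw [hzc, map_mul, ← mul_assoc, ← sq, quadraticChar_sq_one hz, one_mul]
      simp [hz]
  rw [Finset.sum_congr rfl (fun z _ => h1 z), Finset.sum_sub_distrib]
  have h2 : ∑ z : F, χ (1 + c * z⁻¹) = ∑ z : F, χ (1 + c * z) :=
    (Fintype.sum_bijective (·⁻¹) (Function.Involutive.bijective inv_inv)
      (fun z : F => χ (1 + c * z)) (fun z : F => χ (1 + c * z⁻¹)) (fun z => by simp [inv_inv])).symm
  have hbij : Function.Bijective (fun z : F => 1 + c * z) := by
    constructor
    · intro x y h
      exact mul_left_cancel₀ hc (add_left_cancel h)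
    · intro w; exact ⟨(w - 1) / c, by field_simp; ring⟩
  have h3 : ∑ z : F, χ (1 + c * z) = ∑ w : F, χ w :=
    Fintype.sum_bijective _ hbij _ _ (fun z => rfl)
  rw [h2, h3, quadraticChar_sum_zero hF]
  simp

end Paley

section Paley2
variable {F : Type*} [Field F] [Fintype F] [DecidableEq F]

local notation "χ" => quadraticChar F

lemma sumA (hF : ringChar F ≠ 2) {a b : F} (hab : a ≠ b) :
    ∑ y : F, χ (y - a) * χ (y - b) = -1 := by
  have h := Fintype.sum_bijective (· + a) (Equiv.addRight a).bijective
    (fun z : F => χ z * χ (z + (a - b))) (fun y => χ (y - a) * χ (y - b))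
    (fun z => by ring_nf)
  rw [← h, key_sum hF (sub_ne_zero.mpr hab)]

lemma sumB (hF : ringChar F ≠ 2) (a b : F) :
    ∑ y : F, χ (y - a) * (χ (y - b)) ^ 2 = -(χ (b - a)) := by
  have h : ∀ y : F, χ (y - a) * (χ (y - b)) ^ 2
      = χ (y - a) - if y = b then χ (b - a) else 0 := by
    intro y
    by_cases hy : y = b
    · simp [hy, quadraticChar_zero]
    · rw [quadraticChar_sq_one (sub_ne_zero.mpr hy)]; simp [hy]
  rw [Finset.sum_congr rfl (fun y _ => h y), Finset.sum_sub_distrib, sum_chi_shift hF,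
    Finset.sum_ite_eq' Finset.univ b (fun _ => χ (b - a))]
  simp

lemma sumD {a b : F} (hab : a ≠ b) :
    ∑ y : F, (χ (y - a)) ^ 2 * (χ (y - b)) ^ 2 = (Fintype.card F : ℤ) - 2 := by
  have h : ∀ y : F, (χ (y - a)) ^ 2 * (χ (y - b)) ^ 2
      = 1 - (if y = a then 1 else 0) - (if y = b then 1 else 0) := by
    intro y
    by_cases hy : y = a
    · have : y ≠ b := hy ▸ hab
      simp [hy, this, hab, quadraticChar_zero]
    · by_cases hy' : y = b
      · simp [hy', hy, Ne.symm hab, quadraticChar_zero]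
      · rw [quadraticChar_sq_one (sub_ne_zero.mpr hy), quadraticChar_sq_one (sub_ne_zero.mpr hy')]
        simp [hy, hy']
  rw [Finset.sum_congr rfl (fun y _ => h y), Finset.sum_sub_distrib, Finset.sum_sub_distrib]
  simp [Finset.card_univ]
  ring

lemma ind1 (t : F) : (if t ≠ 0 ∧ IsSquare t then (2:ℤ) else 0) = χ t + (χ t) ^ 2 := by
  by_cases ht : t = 0
  · simp [ht, quadraticChar_zero]
  · by_cases hs : IsSquare t
    · rw [if_pos ⟨ht, hs⟩, (quadraticChar_one_iff_isSquare ht).mpr hs]; norm_num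
    · rw [if_neg (by tauto), quadraticChar_neg_one_iff_not_isSquare.mpr hs]; norm_num

lemma ind3 (t : F) : (if t ≠ 0 ∧ ¬ IsSquare t then (2:ℤ) else 0) = (χ t) ^ 2 - χ t := by
  by_cases ht : t = 0
  · simp [ht, quadraticChar_zero]
  · by_cases hs : IsSquare t
    · rw [if_neg (by tauto), (quadraticChar_one_iff_isSquare ht).mpr hs]; norm_num
    · rw [if_pos ⟨ht, hs⟩, quadraticChar_neg_one_iff_not_isSquare.mpr hs]; norm_num

lemma cast_card_filter (p : F → Prop) [DecidablePred p] :
    ((Finset.univ.filter p).card : ℤ) = ∑ x : F, if p x then (1:ℤ) else 0 := by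
  rw [Finset.card_filter]
  push_cast
  exact Finset.sum_congr rfl (fun x _ => by split <;> simp)

end Paley2


/-- For a prime power v ≡ 3 (mod 4), the v×v matrix whose (x,y)-entry is
1 if y−x is a nonzero square, 2 if y=x, and 3 otherwise, is a 3-mosaic:
colours 1 and 3 each define 2-(v,(v−1)/2,(v−3)/4) designs and colour 2 the
trivial 2-(v,1,0) design. -/
theorem paley_three_mosaic (v : ℕ) (F : Type*) [Field F] [Fintype F] [DecidableEq F]
    (hcard : Fintype.card F = v) (hv : v % 4 = 3) :
    -- colour 1 : entries with y − x a nonzero square form a 2-(v,(v−1)/2,(v−3)/4) design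
    ((∀ y : F, (Finset.univ.filter (fun x : F => y - x ≠ 0 ∧ IsSquare (y - x))).card
        = (v - 1) / 2) ∧
      ∀ T : Finset F, T.card = 2 →
        (Finset.univ.filter (fun y : F =>
          T ⊆ Finset.univ.filter (fun x : F => y - x ≠ 0 ∧ IsSquare (y - x)))).card
          = (v - 3) / 4) ∧
    -- colour 3 : entries with y − x a nonsquare form a 2-(v,(v−1)/2,(v−3)/4) design
    ((∀ y : F, (Finset.univ.filter (fun x : F => y - x ≠ 0 ∧ ¬ IsSquare (y - x))).card
        = (v - 1) / 2) ∧
      ∀ T : Finset F, T.card = 2 →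
        (Finset.univ.filter (fun y : F =>
          T ⊆ Finset.univ.filter (fun x : F => y - x ≠ 0 ∧ ¬ IsSquare (y - x)))).card
          = (v - 3) / 4) ∧
    -- colour 2 : the diagonal forms the trivial 2-(v,1,0) design
    ((∀ y : F, (Finset.univ.filter (fun x : F => y - x = 0)).card = 1) ∧
      ∀ T : Finset F, T.card = 2 →
        (Finset.univ.filter (fun y : F =>
          T ⊆ Finset.univ.filter (fun x : F => y - x = 0))).card = 0) := by
  subst hcard
  set q : ℕ := Fintype.card F with hq
  have hq3 : 3 ≤ q := by omega
  have hF2 : ringChar F ≠ 2 := by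
    intro h
    have := FiniteField.even_card_of_char_two h
    omega
  have hneg : quadraticChar F (-1 : F) = -1 := by
    rw [quadraticChar_neg_one_iff_not_isSquare, FiniteField.isSquare_neg_one_iff]
    simp [hv]; exact hv
  -- the diagonal filter
  have hdiag : ∀ y : F, Finset.univ.filter (fun x : F => y - x = 0) = {y} := by
    intro y
    ext x
    simp [sub_eq_zero, eq_comm]
  have hxab : ∀ a b : F, quadraticChar F (a - b) = - quadraticChar F (b - a) := by
    intro a b
    have h : (a - b) = (-1) * (b - a) := by ring
    rw [h, map_mul, hneg]; ring
  refine ⟨⟨?_, ?_⟩, ⟨?_, ?_⟩, ?_, ?_⟩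
  · -- colour 1 rows
    intro y
    have h2 : (2:ℤ) * ((Finset.univ.filter
        (fun x : F => y - x ≠ 0 ∧ IsSquare (y - x))).card : ℤ) = (q : ℤ) - 1 := by
      rw [cast_card_filter, Finset.mul_sum]
      have hpt : ∀ x : F, (2:ℤ) * (if y - x ≠ 0 ∧ IsSquare (y - x) then (1:ℤ) else 0)
          = quadraticChar F (y - x) + (quadraticChar F (y - x)) ^ 2 := by
        intro x
        rw [← ind1 (y - x)]
        split <;> ring
      rw [Finset.sum_congr rfl (fun x _ => hpt x), Finset.sum_add_distrib,
        sum_chi_rev hF2 y, sum_chi_rev_sq y]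
      ring
    have : 2 * (Finset.univ.filter
        (fun x : F => y - x ≠ 0 ∧ IsSquare (y - x))).card + 1 = q := by
      exact_mod_cast (by push_cast; linarith : ((2 * (Finset.univ.filter
        (fun x : F => y - x ≠ 0 ∧ IsSquare (y - x))).card + 1 : ℕ) : ℤ) = (q:ℤ))
    omega
  · -- colour 1 pairs
    intro T hT
    obtain ⟨a, b, hab, rfl⟩ := Finset.card_eq_two.mp hT
    have hsub : ∀ y : F, ({a, b} ⊆ Finset.univ.filter
        (fun x : F => y - x ≠ 0 ∧ IsSquare (y - x)))
        ↔ ((y - a ≠ 0 ∧ IsSquare (y - a)) ∧ (y - b ≠ 0 ∧ IsSquare (y - b))) := by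
      intro y
      simp [Finset.insert_subset_iff, Finset.mem_filter]
    have h4 : (4:ℤ) * ((Finset.univ.filter (fun y : F => ({a, b} : Finset F) ⊆
        Finset.univ.filter (fun x : F => y - x ≠ 0 ∧ IsSquare (y - x)))).card : ℤ)
        = (q : ℤ) - 3 := by
      rw [cast_card_filter, Finset.mul_sum]
      have hpt : ∀ y : F, (4:ℤ) * (if ({a, b} : Finset F) ⊆
          Finset.univ.filter (fun x : F => y - x ≠ 0 ∧ IsSquare (y - x)) then (1:ℤ) else 0)
          = (quadraticChar F (y - a) + (quadraticChar F (y - a)) ^ 2)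
            * (quadraticChar F (y - b) + (quadraticChar F (y - b)) ^ 2) := by
        intro y
        rw [← ind1 (y - a), ← ind1 (y - b)]
        by_cases h : ({a, b} : Finset F) ⊆
            Finset.univ.filter (fun x : F => y - x ≠ 0 ∧ IsSquare (y - x))
        · obtain ⟨h1, h2⟩ := (hsub y).mp h
          rw [if_pos h, if_pos h1, if_pos h2]; ring
        · have := (hsub y).not.mp h
          rw [if_neg h]
          rcases not_and_or.mp this with h' | h'
          · rw [if_neg h']; ring
          · rw [if_neg h']; ring
      rw [Finset.sum_congr rfl (fun y _ => hpt y)]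
      have expand : ∑ y : F, (quadraticChar F (y - a) + (quadraticChar F (y - a)) ^ 2)
            * (quadraticChar F (y - b) + (quadraticChar F (y - b)) ^ 2)
          = (∑ y : F, quadraticChar F (y - a) * quadraticChar F (y - b))
            + ((∑ y : F, quadraticChar F (y - a) * (quadraticChar F (y - b)) ^ 2)
            + ((∑ y : F, quadraticChar F (y - b) * (quadraticChar F (y - a)) ^ 2)
            + (∑ y : F, (quadraticChar F (y - a)) ^ 2 * (quadraticChar F (y - b)) ^ 2))) := by
        rw [← Finset.sum_add_distrib, ← Finset.sum_add_distrib, ← Finset.sum_add_distrib]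
        exact Finset.sum_congr rfl (fun y _ => by ring)
      rw [expand, sumA hF2 hab, sumB hF2 a b, sumB hF2 b a, sumD hab, hxab a b]
      ring
    have : 4 * (Finset.univ.filter (fun y : F => ({a, b} : Finset F) ⊆
        Finset.univ.filter (fun x : F => y - x ≠ 0 ∧ IsSquare (y - x)))).card + 3 = q := by
      exact_mod_cast (by push_cast; linarith : ((4 * (Finset.univ.filter (fun y : F => ({a, b} : Finset F) ⊆
        Finset.univ.filter (fun x : F => y - x ≠ 0 ∧ IsSquare (y - x)))).card + 3 : ℕ) : ℤ)
        = (q:ℤ))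
    omega
  · -- colour 3 rows
    intro y
    have h2 : (2:ℤ) * ((Finset.univ.filter
        (fun x : F => y - x ≠ 0 ∧ ¬ IsSquare (y - x))).card : ℤ) = (q : ℤ) - 1 := by
      rw [cast_card_filter, Finset.mul_sum]
      have hpt : ∀ x : F, (2:ℤ) * (if y - x ≠ 0 ∧ ¬ IsSquare (y - x) then (1:ℤ) else 0)
          = (quadraticChar F (y - x)) ^ 2 - quadraticChar F (y - x) := by
        intro x
        rw [← ind3 (y - x)]
        split <;> ring
      rw [Finset.sum_congr rfl (fun x _ => hpt x), Finset.sum_sub_distrib,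
        sum_chi_rev hF2 y, sum_chi_rev_sq y]
      ring
    have : 2 * (Finset.univ.filter
        (fun x : F => y - x ≠ 0 ∧ ¬ IsSquare (y - x))).card + 1 = q := by
      exact_mod_cast (by push_cast; linarith : ((2 * (Finset.univ.filter
        (fun x : F => y - x ≠ 0 ∧ ¬ IsSquare (y - x))).card + 1 : ℕ) : ℤ) = (q:ℤ))
    omega
  · -- colour 3 pairs
    intro T hT
    obtain ⟨a, b, hab, rfl⟩ := Finset.card_eq_two.mp hT
    have hsub : ∀ y : F, ({a, b} ⊆ Finset.univ.filter
        (fun x : F => y - x ≠ 0 ∧ ¬ IsSquare (y - x)))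
        ↔ ((y - a ≠ 0 ∧ ¬ IsSquare (y - a)) ∧ (y - b ≠ 0 ∧ ¬ IsSquare (y - b))) := by
      intro y
      simp [Finset.insert_subset_iff, Finset.mem_filter]
    have h4 : (4:ℤ) * ((Finset.univ.filter (fun y : F => ({a, b} : Finset F) ⊆
        Finset.univ.filter (fun x : F => y - x ≠ 0 ∧ ¬ IsSquare (y - x)))).card : ℤ)
        = (q : ℤ) - 3 := by
      rw [cast_card_filter, Finset.mul_sum]
      have hpt : ∀ y : F, (4:ℤ) * (if ({a, b} : Finset F) ⊆
          Finset.univ.filter (fun x : F => y - x ≠ 0 ∧ ¬ IsSquare (y - x)) then (1:ℤ) else 0)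
          = ((quadraticChar F (y - a)) ^ 2 - quadraticChar F (y - a))
            * ((quadraticChar F (y - b)) ^ 2 - quadraticChar F (y - b)) := by
        intro y
        rw [← ind3 (y - a), ← ind3 (y - b)]
        by_cases h : ({a, b} : Finset F) ⊆
            Finset.univ.filter (fun x : F => y - x ≠ 0 ∧ ¬ IsSquare (y - x))
        · obtain ⟨h1, h2⟩ := (hsub y).mp h
          rw [if_pos h, if_pos h1, if_pos h2]; ring
        · have := (hsub y).not.mp h
          rw [if_neg h]
          rcases not_and_or.mp this with h' | h'
          · rw [if_neg h']; ring
          · rw [if_neg h']; ring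
      rw [Finset.sum_congr rfl (fun y _ => hpt y)]
      have expand : ∑ y : F, ((quadraticChar F (y - a)) ^ 2 - quadraticChar F (y - a))
            * ((quadraticChar F (y - b)) ^ 2 - quadraticChar F (y - b))
          = (∑ y : F, quadraticChar F (y - a) * quadraticChar F (y - b))
            + ((∑ y : F, (quadraticChar F (y - a)) ^ 2 * (quadraticChar F (y - b)) ^ 2)
            - ((∑ y : F, quadraticChar F (y - a) * (quadraticChar F (y - b)) ^ 2)
            + (∑ y : F, quadraticChar F (y - b) * (quadraticChar F (y - a)) ^ 2))) := by
        rw [Finset.sum_congr rfl (fun y _ => (by ring :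
            ((quadraticChar F (y - a)) ^ 2 - quadraticChar F (y - a))
              * ((quadraticChar F (y - b)) ^ 2 - quadraticChar F (y - b))
            = quadraticChar F (y - a) * quadraticChar F (y - b)
              + ((quadraticChar F (y - a)) ^ 2 * (quadraticChar F (y - b)) ^ 2
              - (quadraticChar F (y - a) * (quadraticChar F (y - b)) ^ 2
                + quadraticChar F (y - b) * (quadraticChar F (y - a)) ^ 2)))),
          Finset.sum_add_distrib, Finset.sum_sub_distrib, Finset.sum_add_distrib]
      rw [expand, sumA hF2 hab, sumB hF2 a b, sumB hF2 b a, sumD hab, hxab a b]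
      ring
    have : 4 * (Finset.univ.filter (fun y : F => ({a, b} : Finset F) ⊆
        Finset.univ.filter (fun x : F => y - x ≠ 0 ∧ ¬ IsSquare (y - x)))).card + 3 = q := by
      exact_mod_cast (by push_cast; linarith : ((4 * (Finset.univ.filter (fun y : F => ({a, b} : Finset F) ⊆
        Finset.univ.filter (fun x : F => y - x ≠ 0 ∧ ¬ IsSquare (y - x)))).card + 3 : ℕ) : ℤ)
        = (q:ℤ))
    omega
  · -- colour 2 rows
    intro y
    rw [hdiag y, Finset.card_singleton]
  · -- colour 2 pairs
    intro T hT
    rw [Finset.card_eq_zero, Finset.filter_eq_empty_iff]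
    intro y _ h
    have := Finset.card_le_card (h.trans (by rw [hdiag y]))
    simp only [Finset.card_singleton, hT] at this
    omega
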